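/- Let Q, B, m > 0, n ≥ 0, C, T₀ ∈ ℝ, and α_i > α_w. For D > 0 define the albedo α_D(T) = (α_i + α_w)/2 − ((α_i − α_w)/2)·tanh((T − T₀)/D), and set A_i = Q(1 − α_i) − B·T₀ and A_w = Q(1 − α_w) − B·T₀. Assume A_i < (n·T₀ + C)/m < A_w. Then for every δ > 0 there exists D₀ > 0 such that for every D with 0 < D < D₀ there exists T with |T − T₀| < δ satisfying Q(1 − α_D(T)) − (n·T + C)/m − B·T = 0; equivalently, the pair (T, A) with A = (n·T + C)/m is an equilibrium of the energy balance system Ṫ = Q(1 − α_D(T)) − (A + B·T), Ȧ = −m·A + n·T + C. -/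

import Mathlib

set_option maxHeartbeats 800000


private lemma my_one_sub_tanh (x : ℝ) : 1 - Real.tanh x = 2 / (Real.exp (2*x) + 1) := by
  have hu : 0 < Real.exp x := Real.exp_pos x
  rw [Real.tanh_eq_sinh_div_cosh, Real.sinh_eq, Real.cosh_eq, Real.exp_neg,
    two_mul, Real.exp_add]
  have hc : (0:ℝ) < (Real.exp x + (Real.exp x)⁻¹) / 2 := by positivity
  field_simp
  ring

private lemma my_continuous_tanh : Continuous Real.tanh := by
  have : Real.tanh = fun x => Real.sinh x / Real.cosh x := by
    funext x; exact Real.tanh_eq_sinh_div_cosh x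
  rw [this]
  exact Real.continuous_sinh.div Real.continuous_cosh (fun x => (Real.cosh_pos x).ne')

/-- Energy balance model: with `αD(T) = (αi + αw)/2 − ((αi − αw)/2)·tanh((T − T₀)/D)`,
`A_i = Q(1 − αi) − B·T₀`, `A_w = Q(1 − αw) − B·T₀`, and assuming
`A_i < (n·T₀ + C)/m < A_w`, for every `δ > 0` there is `D₀ > 0` such that for all
`0 < D < D₀` there is `T` with `|T − T₀| < δ` and
`Q(1 − αD(T)) − (n·T + C)/m − B·T = 0`; i.e. `(T, (n·T + C)/m)` is an equilibrium
of `Ṫ = Q(1 − αD(T)) − (A + B·T)`, `Ȧ = −m·A + n·T + C`. -/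
theorem ebm_equilibrium_near_T0
    (Q B m n C T₀ ai aw : ℝ)
    (hQ : 0 < Q) (hB : 0 < B) (hm : 0 < m) (hn : 0 ≤ n) (ha : aw < ai)
    (h_lo : Q * (1 - ai) - B * T₀ < (n * T₀ + C) / m)
    (h_hi : (n * T₀ + C) / m < Q * (1 - aw) - B * T₀) :
    ∀ δ > 0, ∃ D₀ > 0, ∀ D, 0 < D → D < D₀ →
      ∃ T, |T - T₀| < δ ∧
        Q * (1 - ((ai + aw) / 2 - (ai - aw) / 2 * Real.tanh ((T - T₀) / D)))
          - (n * T + C) / m - B * T = 0 := by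
  intro δ hδ
  set J : ℝ := (n * T₀ + C) / m with hJ
  set g0 : ℝ := J + B * T₀ - Q * (1 - ai) with hg0def
  set h0 : ℝ := Q * (1 - aw) - J - B * T₀ with hh0def
  have hg0 : 0 < g0 := by simp only [hg0def]; linarith
  have hh0 : 0 < h0 := by simp only [hh0def]; linarith
  set k : ℝ := n / m + B with hkdef
  have hk : 0 < k := by have : 0 ≤ n / m := div_nonneg hn hm.le; simp only [hkdef]; linarith
  set δ' : ℝ := min (δ/2) (min (g0/(2*k)) (h0/(2*k))) with hδ'def
  have hδ'pos : 0 < δ' := by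
    apply lt_min (by linarith)
    exact lt_min (by positivity) (by positivity)
  have hδ'k₁ : δ' * k ≤ g0 / 2 := by
    have h1 : δ' ≤ g0/(2*k) := le_trans (min_le_right _ _) (min_le_left _ _)
    calc δ' * k ≤ g0/(2*k) * k := mul_le_mul_of_nonneg_right h1 hk.le
      _ = g0 / 2 := by field_simp
  have hδ'k₂ : δ' * k ≤ h0 / 2 := by
    have h1 : δ' ≤ h0/(2*k) := le_trans (min_le_right _ _) (min_le_right _ _)
    calc δ' * k ≤ h0/(2*k) * k := mul_le_mul_of_nonneg_right h1 hk.le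
      _ = h0 / 2 := by field_simp
  have haw : 0 < Q * (ai - aw) := by nlinarith
  set ε : ℝ := min (g0 / (Q * (ai - aw))) (h0 / (Q * (ai - aw))) with hεdef
  have hε : 0 < ε := lt_min (by positivity) (by positivity)
  set x₀ : ℝ := max (Real.log (2/ε) / 2) 1 with hx₀def
  have hx₀pos : 0 < x₀ := lt_of_lt_of_le one_pos (le_max_right _ _)
  refine ⟨δ' / x₀, by positivity, fun D hD hDlt => ?_⟩
  -- key tanh bound
  have hy : x₀ ≤ δ' / D := by
    rw [le_div_iff₀ hD]
    calc x₀ * D ≤ x₀ * (δ' / x₀) := mul_le_mul_of_nonneg_left hDlt.le hx₀pos.le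
      _ = δ' := by field_simp
  have htanh : 1 - Real.tanh (δ' / D) < ε := by
    rw [my_one_sub_tanh]
    have h1 : Real.log (2/ε) ≤ 2 * (δ' / D) := by
      have : Real.log (2/ε) / 2 ≤ x₀ := le_max_left _ _
      linarith
    have h2 : 2/ε ≤ Real.exp (2 * (δ' / D)) := by
      calc 2/ε = Real.exp (Real.log (2/ε)) := (Real.exp_log (by positivity)).symm
        _ ≤ Real.exp (2 * (δ' / D)) := Real.exp_le_exp.mpr h1
    have h3 : 2/ε < Real.exp (2 * (δ' / D)) + 1 := by linarith
    rw [div_lt_iff₀ (by positivity)]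
    calc (2:ℝ) = ε * (2/ε) := by field_simp
      _ < ε * (Real.exp (2 * (δ' / D)) + 1) := by
          exact mul_lt_mul_of_pos_left h3 hε
  set t : ℝ := Real.tanh (δ' / D) with htdef
  have ht1 : 1 - t < ε := htanh
  -- define F
  set F : ℝ → ℝ := fun T =>
    Q * (1 - ((ai + aw) / 2 - (ai - aw) / 2 * Real.tanh ((T - T₀) / D)))
      - (n * T + C) / m - B * T with hFdef
  have hFcont : Continuous F := by
    apply Continuous.sub
    apply Continuous.sub
    · exact continuous_const.mul (continuous_const.sub (continuous_const.sub
        (continuous_const.mul (my_continuous_tanh.comp ((continuous_id.sub continuous_const).div_const D)))))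
    · exact (continuous_const.mul continuous_id |>.add continuous_const).div_const m
    · exact continuous_const.mul continuous_id
  have hεle₁ : ε ≤ g0 / (Q * (ai - aw)) := min_le_left _ _
  have hεle₂ : ε ≤ h0 / (Q * (ai - aw)) := min_le_right _ _
  have hεmul₁ : Q * (ai - aw) * ε ≤ g0 := by
    calc Q * (ai - aw) * ε ≤ Q * (ai - aw) * (g0 / (Q * (ai - aw))) := mul_le_mul_of_nonneg_left hεle₁ haw.le
      _ = g0 := by field_simp; exact div_self (sub_pos.mpr ha).ne'
  have hεmul₂ : Q * (ai - aw) * ε ≤ h0 := by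
    calc Q * (ai - aw) * ε ≤ Q * (ai - aw) * (h0 / (Q * (ai - aw))) := mul_le_mul_of_nonneg_left hεle₂ haw.le
      _ = h0 := by field_simp; exact div_self (sub_pos.mpr ha).ne'
  -- value at T₋
  have hJsplit₁ : (n * (T₀ - δ') + C) / m = J - n * δ' / m := by
    rw [hJ]; field_simp; ring
  have hJsplit₂ : (n * (T₀ + δ') + C) / m = J + n * δ' / m := by
    rw [hJ]; field_simp; ring
  have hFneg : F (T₀ - δ') < 0 := by
    have harg : (T₀ - δ' - T₀) / D = -(δ' / D) := by ring
    have : F (T₀ - δ') = (Q * (1 - ai) - (J - n * δ' / m) - B * (T₀ - δ'))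
        + Q * (ai - aw) / 2 * (1 - t) := by
      simp only [hFdef, harg, Real.tanh_neg, ← htdef, ← hJsplit₁]
      ring
    rw [this]
    have h1 : Q * (1 - ai) - (J - n * δ' / m) - B * (T₀ - δ') = -g0 + δ' * k := by
      simp only [hg0def, hkdef]; ring
    rw [h1]
    have h2 : Q * (ai - aw) / 2 * (1 - t) < Q * (ai - aw) / 2 * ε := by nlinarith
    nlinarith
  have hFpos : 0 < F (T₀ + δ') := by
    have harg : (T₀ + δ' - T₀) / D = δ' / D := by ring
    have : F (T₀ + δ') = (Q * (1 - aw) - (J + n * δ' / m) - B * (T₀ + δ'))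
        - Q * (ai - aw) / 2 * (1 - t) := by
      simp only [hFdef, harg, ← htdef, ← hJsplit₂]
      ring
    rw [this]
    have h1 : Q * (1 - aw) - (J + n * δ' / m) - B * (T₀ + δ') = h0 - δ' * k := by
      simp only [hh0def, hkdef]; ring
    rw [h1]
    have h2 : Q * (ai - aw) / 2 * (1 - t) < Q * (ai - aw) / 2 * ε := by nlinarith
    nlinarith
  -- IVT
  have hle : T₀ - δ' ≤ T₀ + δ' := by linarith
  have := intermediate_value_Icc hle hFcont.continuousOn
  have h0mem : (0:ℝ) ∈ Set.Icc (F (T₀ - δ')) (F (T₀ + δ')) := ⟨hFneg.le, hFpos.le⟩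
  obtain ⟨T, hTmem, hTeq⟩ := this h0mem
  refine ⟨T, ?_, hTeq⟩
  have hδ'half : δ' ≤ δ / 2 := min_le_left _ _
  rw [abs_lt]
  constructor <;> [skip; skip] <;>
    (first | (have := hTmem.1; linarith) | (have := hTmem.2; linarith))
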